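/- Let {φ_n} be a sequence of globally defined continuous maps φ_n ∈ C(G,X) that converges to φ in C(G,X) with the compact-open topology. If φ_n also converges to some ψ in C_s(G,X), then ψ = φ (in particular dom ψ = G). Consequently, if {φ_{n_i}} is any subsequence of {φ_n} convergent in C_s(G,X), then φ_{n_i} → φ in C_s(G,X). -/

import Mathlib

open Set Filter Topology TopologicalSpace

namespace Yorke

/-- The space `X̂ = X ∪ {ω}`, encoded as `Option X` with `ω = none`.  Its open sets are
`X̂` itself together with the open sets of `X`. -/
instance hatTopology (X : Type*) [TopologicalSpace X] : TopologicalSpace (Option X) :=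
  TopologicalSpace.generateFrom
    ({Set.univ} ∪ {s : Set (Option X) | ∃ u : Set X, IsOpen u ∧ s = (Option.some : X → Option X) '' u})

/-- The space `C_p(G,X)` of partial maps from `G` to `X` (continuous maps defined on a
nonempty open subset of `G`), encoded via the bijection `μ` with the subspace
`{f : C(G,X̂) | f⁻¹(X) ≠ ∅}` of `C(G,X̂)`; it carries the compact-open topology. -/
abbrev Cp (G X : Type*) [TopologicalSpace G] [TopologicalSpace X] : Type _ :=
  {f : C(G, Option X) // {g : G | f g ≠ none}.Nonempty}

variable {G X : Type*} [TopologicalSpace G] [TopologicalSpace X]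

/-- The domain of a partial map. -/
def dom (φ : Cp G X) : Set G := {g : G | φ.1 g ≠ none}

/-- A partial map with nonempty connected domain is maximally defined if every partial map
with nonempty connected domain which extends it is equal to it. -/
def MaximallyDefined (φ : Cp G X) : Prop :=
  IsConnected (dom φ) ∧
    ∀ ψ : Cp G X, IsConnected (dom ψ) → dom φ ⊆ dom ψ →
      (∀ g ∈ dom φ, φ.1 g = ψ.1 g) → φ = ψ

/-- The space `C_s(G,X)` of maximally defined partial maps, with the subspace topology. -/
abbrev Cs (G X : Type*) [TopologicalSpace G] [TopologicalSpace X] : Type _ :=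
  {φ : Cp G X // MaximallyDefined φ}

/-- The orbit `O(φ) = {φ(g) : g ∈ dom φ}`. -/
def orbit (φ : Cs G X) : Set X := {x : X | ∃ g : G, φ.1.1 g = some x}

/-- The star-construction `S*W = {(g,φ) : φ ∈ S, g ∈ dom φ, (g,φ(g)) ∈ W}`. -/
def star (S : Set (Cs G X)) (W : Set (G × X)) : Set (G × Cs G X) :=
  {p : G × Cs G X | p.2 ∈ S ∧ ∃ x : X, p.2.1.1 p.1 = some x ∧ (p.1, x) ∈ W}

/-- `S` satisfies the compactness axiom if `S*W` is compact for every compact `W`. -/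
def CompactnessAxiom (S : Set (Cs G X)) : Prop :=
  ∀ W : Set (G × X), IsCompact W → IsCompact (star S W)

/-- `S` satisfies the existence axiom on `W` if `S*{(t,x)}` is nonempty for all `(t,x) ∈ W`. -/
def ExistenceAxiom (S : Set (Cs G X)) (W : Set (G × X)) : Prop :=
  ∀ p ∈ W, (star S {p}).Nonempty

/-- `S` satisfies the uniqueness axiom on `W` if `S*{(t,x)}` is empty or a singleton. -/
def UniquenessAxiom (S : Set (Cs G X)) (W : Set (G × X)) : Prop :=
  ∀ p ∈ W, (star S {p}).Subsingleton

section GroupPart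

variable {G X : Type*} [TopologicalSpace X] [Group G] [TopologicalSpace G] [IsTopologicalGroup G]

/-- The shift `σ(g,φ)`, the partial map `x ↦ φ(xg)` with domain `(dom φ)g⁻¹`. -/
def shift (g : G) (φ : Cp G X) : Cp G X :=
  ⟨⟨fun x => φ.1 (x * g), φ.1.continuous.comp (continuous_mul_right g)⟩, by
    obtain ⟨g₀, hg₀⟩ := φ.2
    exact ⟨g₀ * g⁻¹, by simpa [inv_mul_cancel_right] using hg₀⟩⟩

/-- `S ⊆ C_s(G,X)` is `σ`-invariant if `σ(g,φ) ∈ S` for all `g ∈ G`, `φ ∈ S`. -/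
def SigmaInvariant (S : Set (Cs G X)) : Prop :=
  ∀ (g : G) (φ : Cs G X), φ ∈ S → ∃ ψ : Cs G X, ψ ∈ S ∧ ψ.1 = shift g φ.1

/-- `A ⊆ X` is weakly invariant with respect to `S` if every `x ∈ A` is the value at the
identity of some `φ ∈ S` with `O(φ) ⊆ A`. -/
def WeaklyInvariant (S : Set (Cs G X)) (A : Set X) : Prop :=
  ∀ x ∈ A, ∃ φ ∈ S, φ.1.1 (1 : G) = some x ∧ orbit φ ⊆ A

/-- `x` is an equilibrium of `S` if some `φ ∈ S` has `φ(e) = x` and `O(φ) = {x}`. -/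
def Equilibrium (S : Set (Cs G X)) (x : X) : Prop :=
  ∃ φ ∈ S, φ.1.1 (1 : G) = some x ∧ orbit φ = {x}

/-- The set of motions `{π(·,x) : x ∈ X} ⊆ C_s(G,X)` of a `G`-action `π`. -/
def actionSet (π : G × X → X) : Set (Cs G X) :=
  {φ : Cs G X | ∃ x : X, ∀ g : G, φ.1.1 g = some (π (g, x))}

end GroupPart

/-- An isomorphism `<H,k,η> : S*W → S'*W'` of star-constructions: the three maps are
homeomorphisms satisfying `ev ∘ H = k ∘ ev` and `p ∘ H = η ∘ p`. -/
structure StarIso {G X G' X' : Type*} [TopologicalSpace G] [TopologicalSpace X]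
    [TopologicalSpace G'] [TopologicalSpace X']
    (S : Set (Cs G X)) (W : Set (G × X)) (S' : Set (Cs G' X')) (W' : Set (G' × X')) where
  H : ↥(star S W) ≃ₜ ↥(star S' W')
  k : ↥W ≃ₜ ↥W'
  η : ↥S ≃ₜ ↥S'
  ev_comm : ∀ (q : ↥(star S W)) (x : X), q.1.2.1.1 q.1.1 = some x →
      ∀ hW : (q.1.1, x) ∈ W, ∀ x' : X', (H q).1.2.1.1 (H q).1.1 = some x' →
      ((k ⟨(q.1.1, x), hW⟩ : ↥W') : G' × X') = ((H q).1.1, x')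
  p_comm : ∀ q : ↥(star S W), (H q).1.2 = ((η ⟨q.1.2, q.2.1⟩ : ↥S') : Cs G' X')

/-- A map `k = (τ,h) : W → W'` preserves phase space if `h(g,x)` does not depend on `g`. -/
def PreservesPhase {G X G' X' : Type*} [TopologicalSpace G] [TopologicalSpace X]
    [TopologicalSpace G'] [TopologicalSpace X'] {W : Set (G × X)} {W' : Set (G' × X')}
    (k : ↥W → ↥W') : Prop :=
  ∀ w w' : ↥W, (w : G × X).2 = (w' : G × X).2 →
    ((k w : ↥W') : G' × X').2 = ((k w' : ↥W') : G' × X').2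

/-- Two continuous maps are isotopic if they are connected by a continuous family of
homeomorphisms parametrized by `[0,1]`. -/
def Isotopic {A B : Type*} [TopologicalSpace A] [TopologicalSpace B] (f₀ f₁ : A → B) : Prop :=
  ∃ F : unitInterval × A → B, Continuous F ∧ (∀ a, F (0, a) = f₀ a) ∧
    (∀ a, F (1, a) = f₁ a) ∧ ∀ s : unitInterval, IsHomeomorph fun a => F (s, a)

end Yorke

namespace Yorke

variable {G X : Type*} [Group G] [TopologicalSpace G] [IsTopologicalGroup G]
  [LocallyCompactSpace G] [SecondCountableTopology G] [T2Space G]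
  [MetricSpace X] [SecondCountableTopology X]

lemma isOpen_some_image {X : Type*} [TopologicalSpace X] {u : Set X} (hu : IsOpen u) :
    IsOpen ((Option.some : X → Option X) '' u) :=
  TopologicalSpace.isOpen_generateFrom_of_mem (Or.inr ⟨u, hu, rfl⟩)

/-- In `X̂`, a filter cannot converge to two distinct points of `X`. -/
lemma some_limit_unique {X : Type*} [TopologicalSpace X] [T2Space X] {α : Type*}
    {l : Filter α} [l.NeBot] {a : α → Option X} {x y : X}
    (hx : Tendsto a l (𝓝 (some x)) ) (hy : Tendsto a l (𝓝 (some y))) : x = y := by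
  by_contra hxy
  obtain ⟨u, v, hu, hv, hxu, hyv, huv⟩ := t2_separation hxy
  have h1 : ∀ᶠ n in l, a n ∈ (Option.some : X → Option X) '' u :=
    hx ((isOpen_some_image hu).mem_nhds ⟨x, hxu, rfl⟩)
  have h2 : ∀ᶠ n in l, a n ∈ (Option.some : X → Option X) '' v :=
    hy ((isOpen_some_image hv).mem_nhds ⟨y, hyv, rfl⟩)
  obtain ⟨n, ⟨x', hx'u, hx'⟩, ⟨y', hy'v, hy'⟩⟩ := (h1.and h2).exists
  rw [← hy'] at hx'
  obtain rfl := Option.some.inj hx'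
  exact huv.ne_of_mem hx'u hy'v rfl

/-- Uniqueness of limits in `C_s(G,X)` when one of the limits is globally defined. -/
lemma limit_unique {G X : Type*} [TopologicalSpace G] [TopologicalSpace X] [T2Space X]
    (f : ℕ → Cs G X) (ψ χ : Cs G X) (hψdom : dom ψ.1 = Set.univ)
    (h1 : Tendsto f atTop (𝓝 ψ)) (h2 : Tendsto f atTop (𝓝 χ)) : χ = ψ := by
  have hev : ∀ g : G, Continuous fun c : Cs G X => c.1.1 g := fun g =>
    (continuous_eval_const g).comp
      (continuous_subtype_val.comp continuous_subtype_val)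
  have hagree : ∀ g ∈ dom χ.1, χ.1.1 g = ψ.1.1 g := by
    intro g hg
    obtain ⟨x, hx⟩ : ∃ x, χ.1.1 g = some x := Option.ne_none_iff_exists'.mp hg
    obtain ⟨y, hy⟩ : ∃ y, ψ.1.1 g = some y := by
      apply Option.ne_none_iff_exists'.mp
      show g ∈ dom ψ.1
      rw [hψdom]; trivial
    have hx' : Tendsto (fun n => (f n).1.1 g) atTop (𝓝 (some x)) := by
      rw [← hx]; exact ((hev g).tendsto χ).comp h2
    have hy' : Tendsto (fun n => (f n).1.1 g) atTop (𝓝 (some y)) := by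
      rw [← hy]; exact ((hev g).tendsto ψ).comp h1
    rw [hx, hy, some_limit_unique hx' hy']
  have : χ.1 = ψ.1 :=
    χ.2.2 ψ.1 ψ.2.1 (by rw [hψdom]; exact Set.subset_univ _) hagree
  exact Subtype.ext this

/-- If a sequence of globally defined maps converges to a globally defined map `ψ` in
`C(G,X)`, then any limit of the sequence in `C_s(G,X)` equals `ψ`; consequently any
convergent subsequence converges to `ψ`. -/
theorem statement_2 (φ : ℕ → Cs G X) (hdom : ∀ n : ℕ, dom (φ n).1 = Set.univ)
    (ψ : Cs G X) (hψdom : dom ψ.1 = Set.univ)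
    (hconv : Tendsto φ atTop (𝓝 ψ)) :
    (∀ χ : Cs G X, Tendsto φ atTop (𝓝 χ) → χ = ψ) ∧
    ∀ m : ℕ → ℕ, StrictMono m → (∃ χ : Cs G X, Tendsto (φ ∘ m) atTop (𝓝 χ)) →
      Tendsto (φ ∘ m) atTop (𝓝 ψ) := by
  refine ⟨fun χ hχ => limit_unique φ ψ χ hψdom hconv hχ, fun m hm ⟨χ, hχ⟩ => ?_⟩
  have hψ' : Tendsto (φ ∘ m) atTop (𝓝 ψ) := hconv.comp hm.tendsto_atTop
  rwa [limit_unique (φ ∘ m) ψ χ hψdom hψ' hχ] at hχ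

end Yorke
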